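/- A real symmetric 3×3 matrix X (with entries xᵢⱼ = X i j, 1-based, x₂₁ = x₁₂ etc.) belongs to the orbit {g * diag(1,1,−2) * gᵀ : g ∈ SO(3)} if and only if the following five equations hold: x₁₁ + x₂₂ + x₃₃ = 0; x₂₃² − x₂₂x₃₃ + x₂₂ + x₃₃ − 1 = 0; x₁₃² + x₂₂x₃₃ + x₃₃² − x₂₂ − 1 = 0; x₁₂x₃₃ − x₁₃x₂₃ − x₁₂ = 0; x₁₂² + x₂₂² + x₂₂x₃₃ − x₃₃ − 1 = 0. (The orbit is an algebraically quadratic surface defined by four quadratic equations in the hyperplane of traceless matrices.) -/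

import Mathlib

open Matrix

private lemma so3_exists (x y z : ℝ) (h : x^2 + y^2 + z^2 = 1) :
    ∃ g : Matrix (Fin 3) (Fin 3) ℝ, g * gᵀ = 1 ∧ g.det = 1 ∧
      g * Matrix.diagonal ![1, 1, -2] * gᵀ =
        !![1-3*x^2, -3*(x*y), -3*(x*z); -3*(x*y), 1-3*y^2, -3*(y*z); -3*(x*z), -3*(y*z), 1-3*z^2] := by
  by_cases hz : 1 + z = 0
  · have hzz : z = -1 := by linarith
    have hx : x = 0 := by nlinarith [sq_nonneg x, sq_nonneg y]
    have hy : y = 0 := by nlinarith [sq_nonneg x, sq_nonneg y]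
    refine ⟨1, by simp, by simp, ?_⟩
    subst hx hy hzz
    ext i j
    fin_cases i <;> fin_cases j <;>
      simp [Matrix.mul_apply, Matrix.vecHead, Matrix.vecTail, Matrix.transpose_apply, Fin.sum_univ_three, Matrix.diagonal, Matrix.one_apply] <;>
      norm_num
  · have hu : (1+z)⁻¹ * (1 + z) = 1 := inv_mul_cancel₀ hz
    set u : ℝ := (1+z)⁻¹ with hudef
    refine ⟨!![1 - x^2*u, -(x*y*u), x; -(x*y*u), 1 - y^2*u, y; -x, -y, z], ?_, ?_, ?_⟩
    · ext i j
      fin_cases i <;> fin_cases j <;>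
        simp [Matrix.mul_apply, Matrix.vecHead, Matrix.vecTail, Matrix.transpose_apply, Fin.sum_univ_three, Matrix.one_apply]
      · linear_combination (x^2*u^2) * h + (-x^2 + x^2*u - x^2*z*u) * hu
      · linear_combination (x*y*u^2) * h + (-(x*y) + x*y*u - x*y*z*u) * hu
      · linear_combination (x*u) * h + (x - x*z) * hu
      · linear_combination (x*y*u^2) * h + (-(x*y) + x*y*u - x*y*z*u) * hu
      · linear_combination (1 - 2*u + u^2 - z^2*u^2 + y^2*u^2) * h +
          (-1 + u - z*u + z^2 - z^2*u + z^3*u + x^2 - x^2*u + x^2*z*u) * hu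
      · linear_combination (y*u) * h + (y - y*z) * hu
      · linear_combination (x*u) * h + (x - x*z) * hu
      · linear_combination (y*u) * h + (y - y*z) * hu
      · linear_combination h
    · rw [Matrix.det_fin_three]
      simp
      linear_combination (1 - z*u) * h + (-z + z^2) * hu
    · ext i j
      fin_cases i <;> fin_cases j <;>
        simp [Matrix.mul_apply, Matrix.vecHead, Matrix.vecTail, Matrix.transpose_apply, Fin.sum_univ_three, Matrix.diagonal]
      · linear_combination (x^2*u^2) * h + (-x^2 + x^2*u - x^2*z*u) * hu
      · linear_combination (x*y*u^2) * h + (-(x*y) + x*y*u - x*y*z*u) * hu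
      · linear_combination (x*u) * h + (x - x*z) * hu
      · linear_combination (x*y*u^2) * h + (-(x*y) + x*y*u - x*y*z*u) * hu
      · linear_combination (1 - 2*u + u^2 - z^2*u^2 + y^2*u^2) * h +
          (-1 + u - z*u + z^2 - z^2*u + z^3*u + x^2 - x^2*u + x^2*z*u) * hu
      · linear_combination (y*u) * h + (y - y*z) * hu
      · linear_combination (x*u) * h + (x - x*z) * hu
      · linear_combination (y*u) * h + (y - y*z) * hu
      · linear_combination h

private lemma key (a b c p q r : ℝ)
    (h1 : a + b + c = 0)
    (h2 : r^2 - b*c + b + c - 1 = 0)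
    (h3 : q^2 + b*c + c^2 - b - 1 = 0)
    (h4 : p*c - q*r - p = 0)
    (h5 : p^2 + b^2 + b*c - c - 1 = 0) :
    ∃ x y z : ℝ, x^2 + y^2 + z^2 = 1 ∧ a = 1 - 3*x^2 ∧ b = 1 - 3*y^2 ∧
      c = 1 - 3*z^2 ∧ p = -3*(x*y) ∧ q = -3*(x*z) ∧ r = -3*(y*z) := by
  have hp2 : p^2 = (1-b)*(1-a) := by linear_combination h5 + (1-b)*h1
  have hq2 : q^2 = (1-c)*(1-a) := by linear_combination h3 + (1-c)*h1
  have hr2 : r^2 = (1-b)*(1-c) := by linear_combination h2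
  by_cases ha : a = 1
  · have hp : p = 0 := by
      have : p^2 = 0 := by rw [hp2, ha]; ring
      exact (pow_eq_zero_iff two_ne_zero).mp this
    have hq : q = 0 := by
      have : q^2 = 0 := by rw [hq2, ha]; ring
      exact (pow_eq_zero_iff two_ne_zero).mp this
    by_cases hb : b = 1
    · have hr : r = 0 := by
        have : r^2 = 0 := by rw [hr2, hb]; ring
        exact (pow_eq_zero_iff two_ne_zero).mp this
      have hc : c = -2 := by linarith
      exact ⟨0, 0, 1, by norm_num, by rw [ha]; norm_num, by rw [hb]; norm_num,
        by rw [hc]; norm_num, by rw [hp]; ring, by rw [hq]; ring, by rw [hr]; ring⟩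
    · have hc : c = -1 - b := by linarith
      have hbnn : 0 ≤ 1 - b := by nlinarith [sq_nonneg r]
      have hbpos : 0 < 1 - b := lt_of_le_of_ne hbnn (fun hh => hb (by linarith))
      set y : ℝ := Real.sqrt ((1-b)/3) with hydef
      have hy2 : y^2 = (1-b)/3 := Real.sq_sqrt (by linarith)
      have hy0 : y ≠ 0 := by
        intro hh
        rw [hh] at hy2; simp at hy2; linarith
      have hz2 : (-r/(3*y))^2 = (1-c)/3 := by
        field_simp
        linear_combination hr2 + 3*(c-1)*hy2
      refine ⟨0, y, -r/(3*y), ?_, by rw [ha]; norm_num, by rw [hy2]; ring,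
        by rw [hz2]; ring, by rw [hp]; ring, by rw [hq]; ring, ?_⟩
      · rw [hy2, hz2]; linarith
      · field_simp
  · have hApos : 0 < 1 - a := by
      have hpq2 : p^2 + q^2 = (1-a)*(2+a) := by
        linear_combination h5 + h3 + (1+a-b-c)*h1
      have : 0 ≤ 1 - a := by nlinarith [sq_nonneg p, sq_nonneg q]
      exact lt_of_le_of_ne this (fun hh => ha (by linarith))
    set x : ℝ := Real.sqrt ((1-a)/3) with hxdef
    have hx2 : x^2 = (1-a)/3 := Real.sq_sqrt (by linarith)
    have hx0 : x ≠ 0 := by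
      intro hh
      rw [hh] at hx2; simp at hx2; linarith
    have h6 : (c-1)*(p*q + r*(1-a)) = 0 := by
      linear_combination q*h4 + r*h3 - (c-1)*r*h1
    have hpq : p*q = -(r*(1-a)) := by
      by_cases hc : c = 1
      · have hq0 : q = 0 := by
          have : q^2 = 0 := by rw [hq2, hc]; ring
          exact (pow_eq_zero_iff two_ne_zero).mp this
        have hr0 : r = 0 := by
          have : r^2 = 0 := by rw [hr2, hc]; ring
          exact (pow_eq_zero_iff two_ne_zero).mp this
        rw [hq0, hr0]; ring
      · rcases mul_eq_zero.mp h6 with hh | hh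
        · exact absurd (by linarith : c = 1) hc
        · linarith
    have hy2 : (-p/(3*x))^2 = (1-b)/3 := by
      field_simp
      linear_combination hp2 + 3*(b-1)*hx2
    have hz2 : (-q/(3*x))^2 = (1-c)/3 := by
      field_simp
      linear_combination hq2 + 3*(c-1)*hx2
    refine ⟨x, -p/(3*x), -q/(3*x), ?_, by rw [hx2]; ring, by rw [hy2]; ring,
      by rw [hz2]; ring, by field_simp <;> ring, by field_simp <;> ring, ?_⟩
    · rw [hx2, hy2, hz2]; linarith
    · field_simp
      linear_combination 3*r*hx2 + hpq

/-- The orbit of diag(1,1,−2) is the quadratic surface cut out by the trace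
condition and four quadratic equations in the matrix entries. -/
theorem orbit_quadratic_equations
    (X : Matrix (Fin 3) (Fin 3) ℝ) (hX : X.IsSymm) :
    (∃ g : Matrix (Fin 3) (Fin 3) ℝ,
        g * gᵀ = 1 ∧ g.det = 1 ∧
        X = g * Matrix.diagonal ![1, 1, -2] * gᵀ) ↔
      (X 0 0 + X 1 1 + X 2 2 = 0 ∧
       X 1 2 ^ 2 - X 1 1 * X 2 2 + X 1 1 + X 2 2 - 1 = 0 ∧
       X 0 2 ^ 2 + X 1 1 * X 2 2 + X 2 2 ^ 2 - X 1 1 - 1 = 0 ∧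
       X 0 1 * X 2 2 - X 0 2 * X 1 2 - X 0 1 = 0 ∧
       X 0 1 ^ 2 + X 1 1 ^ 2 + X 1 1 * X 2 2 - X 2 2 - 1 = 0) := by
  have hs10 : X 1 0 = X 0 1 := by
    conv_lhs => rw [← hX]
    rfl
  have hs20 : X 2 0 = X 0 2 := by
    conv_lhs => rw [← hX]
    rfl
  have hs21 : X 2 1 = X 1 2 := by
    conv_lhs => rw [← hX]
    rfl
  constructor
  · rintro ⟨g, hg, hdet, hXeq⟩
    have hgt : gᵀ * g = 1 := mul_eq_one_comm.mp hg
    set D : Matrix (Fin 3) (Fin 3) ℝ := Matrix.diagonal ![1, 1, -2] with hD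
    have hDD : D * D + D = (2:ℝ) • (1 : Matrix (Fin 3) (Fin 3) ℝ) := by
      ext i j
      fin_cases i <;> fin_cases j <;>
        simp [hD, Matrix.mul_apply, Fin.sum_univ_three, Matrix.diagonal, Matrix.one_apply] <;>
        norm_num
    have hQ : X * X + X = (2:ℝ) • (1 : Matrix (Fin 3) (Fin 3) ℝ) := by
      rw [hXeq]
      have e1 : g * D * gᵀ * (g * D * gᵀ) = g * (D * D) * gᵀ := by
        calc g * D * gᵀ * (g * D * gᵀ) = g * D * (gᵀ * g) * (D * gᵀ) := by
              noncomm_ring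
          _ = g * (D * D) * gᵀ := by rw [hgt]; noncomm_ring
      rw [e1]
      calc g * (D * D) * gᵀ + g * D * gᵀ = g * (D * D + D) * gᵀ := by noncomm_ring
        _ = (2:ℝ) • (g * gᵀ) := by rw [hDD]; noncomm_ring
        _ = (2:ℝ) • 1 := by rw [hg]
    have htr : X 0 0 + X 1 1 + X 2 2 = 0 := by
      have t1 : X.trace = D.trace := by
        rw [hXeq, Matrix.trace_mul_cycle, hgt, one_mul]
      have t2 : X.trace = X 0 0 + X 1 1 + X 2 2 := by
        simp [Matrix.trace, Fin.sum_univ_three]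
      have t3 : D.trace = 0 := by
        simp [hD, Matrix.trace, Fin.sum_univ_three, Matrix.diagonal]
        norm_num
      rw [t2, t3] at t1
      exact t1
    have h00 := congrFun (congrFun hQ 0) 0
    have h11 := congrFun (congrFun hQ 1) 1
    have h22 := congrFun (congrFun hQ 2) 2
    have h01 := congrFun (congrFun hQ 0) 1
    simp [Matrix.add_apply, Matrix.mul_apply, Fin.sum_univ_three, Matrix.smul_apply,
      Matrix.one_apply, hs10, hs20, hs21] at h00 h11 h22 h01
    refine ⟨htr, ?_, ?_, ?_, ?_⟩
    · linear_combination (h11 + h22 - h00)/2 + ((X 0 0 - X 1 1 - X 2 2 + 1)/2) * htr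
    · linear_combination (h00 + h22 - h11)/2 + ((X 1 1 + X 2 2 - X 0 0 - 1)/2) * htr
    · linear_combination -h01 + X 0 1 * htr
    · linear_combination (h00 + h11 - h22)/2 + ((X 1 1 + X 2 2 - X 0 0 - 1)/2) * htr
  · rintro ⟨h1, h2, h3, h4, h5⟩
    obtain ⟨x, y, z, hn, ea, eb, ec, ep, eq', er⟩ :=
      key (X 0 0) (X 1 1) (X 2 2) (X 0 1) (X 0 2) (X 1 2) h1 h2 h3 h4 h5
    obtain ⟨g, hg, hdet, hgd⟩ := so3_exists x y z hn
    refine ⟨g, hg, hdet, ?_⟩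
    rw [hgd]
    ext i j
    fin_cases i <;> fin_cases j <;>
      simp only [Matrix.cons_val', Matrix.cons_val_zero, Matrix.cons_val_one, Matrix.head_cons,
        Matrix.empty_val', Matrix.cons_val_fin_one, Matrix.head_fin_const, Fin.isValue,
        Matrix.of_apply]
    · exact ea
    · exact ep
    · exact eq'
    · exact hs10.trans ep
    · exact eb
    · exact er
    · exact hs20.trans eq'
    · exact hs21.trans er
    · exact ec
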